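/- Let a = (0.4, 0.4, 0.1, 0.1) and b = (0.5, 0.29, 0.21, 0) be probability vectors. Then a ⊗ a is majorized by b ⊗ b and a ⊗ b is majorized by b ⊗ a, but a ⊗ a is not majorized by b ⊗ a and a ⊗ b is not majorized by b ⊗ b. -/

import Mathlib

/-- Sum of the `k` largest entries of a finite multiset of reals. -/
noncomputable def topSum (k : ℕ) (A : Multiset ℝ) : ℝ :=
  (((A.sort (· ≤ ·)).reverse.take k).sum)

/-- `A` is majorized by `B`: every partial sum of the largest entries of `A`
is at most the corresponding one of `B`. -/
def Majorized (A B : Multiset ℝ) : Prop := ∀ k : ℕ, topSum k A ≤ topSum k B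

/-- Pairwise product (tensor product) of multisets of reals. -/
def pProd (A B : Multiset ℝ) : Multiset ℝ :=
  (A.product B).map fun p => p.1 * p.2

lemma sort_eq_of (A : Multiset ℝ) (L : List ℝ) (h : A = ↑L) (hs : L.Pairwise (· ≤ ·)) :
    A.sort (· ≤ ·) = L :=
  List.Perm.eq_of_pairwise' (Multiset.pairwise_sort _ _) hs
    (Multiset.coe_eq_coe.mp (by rw [Multiset.sort_eq, h]))

lemma perm_of_int (Mq Lq : List ℤ) (M L : List ℝ) (hp : Mq.Perm Lq)
    (hM : M = Mq.map (fun z : ℤ => (z:ℝ)/10000)) (hL : L = Lq.map (fun z : ℤ => (z:ℝ)/10000)) :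
    M.Perm L := by rw [hM, hL]; exact hp.map _

lemma maj_of (A B : Multiset ℝ) (L M : List ℝ)
    (hA : A.sort (· ≤ ·) = L) (hB : B.sort (· ≤ ·) = M)
    (hL : L.length = 16) (hM : M.length = 16)
    (h : ∀ k ≤ 16, (L.reverse.take k).sum ≤ (M.reverse.take k).sum) : Majorized A B := by
  intro k
  unfold topSum
  rw [hA, hB]
  rcases le_or_gt k 16 with hk | hk
  · exact h k hk
  · rw [List.take_of_length_le (by rw [List.length_reverse, hL]; omega),
        List.take_of_length_le (by rw [List.length_reverse, hM]; omega)]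
    have := h 16 le_rfl
    rwa [List.take_of_length_le (by simp [hL]), List.take_of_length_le (by simp [hM])] at this

set_option maxHeartbeats 2000000 in
theorem locc_flexible_advantage :
    let a : Multiset ℝ := {0.4, 0.4, 0.1, 0.1}
    let b : Multiset ℝ := {0.5, 0.29, 0.21, 0}
    Majorized (pProd a a) (pProd b b) ∧
      Majorized (pProd a b) (pProd b a) ∧
      ¬ Majorized (pProd a a) (pProd b a) ∧
      ¬ Majorized (pProd a b) (pProd b b) := by
  intro a b
  set Laa : List ℝ := [0.01,0.01,0.01,0.01,0.04,0.04,0.04,0.04,0.04,0.04,0.04,0.04,0.16,0.16,0.16,0.16] with hLaa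
  set Lbb : List ℝ := [0,0,0,0,0,0,0,0.0441,0.0609,0.0609,0.0841,0.105,0.105,0.145,0.145,0.25] with hLbb
  set Lab : List ℝ := [0,0,0,0,0.021,0.021,0.029,0.029,0.05,0.05,0.084,0.084,0.116,0.116,0.2,0.2] with hLab
  have haa : (pProd a a).sort (· ≤ ·) = Laa := by
    apply sort_eq_of _ _ _ (by rw [hLaa]; norm_num [List.pairwise_cons])
    rw [show pProd a a = ↑(([(0.4:ℝ),0.4,0.1,0.1].product [0.4,0.4,0.1,0.1]).map fun p => p.1*p.2) from rfl]
    refine Multiset.coe_eq_coe.mpr ?_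
    apply perm_of_int [1600,1600,400,400,1600,1600,400,400,400,400,100,100,400,400,100,100]
      [100,100,100,100,400,400,400,400,400,400,400,400,1600,1600,1600,1600]
    · decide
    · norm_num [List.product]
    · rw [hLaa]; norm_num
  have hbb : (pProd b b).sort (· ≤ ·) = Lbb := by
    apply sort_eq_of _ _ _ (by rw [hLbb]; norm_num [List.pairwise_cons])
    rw [show pProd b b = ↑(([(0.5:ℝ),0.29,0.21,0].product [0.5,0.29,0.21,0]).map fun p => p.1*p.2) from rfl]
    refine Multiset.coe_eq_coe.mpr ?_
    apply perm_of_int [2500,1450,1050,0,1450,841,609,0,1050,609,441,0,0,0,0,0]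
      [0,0,0,0,0,0,0,441,609,609,841,1050,1050,1450,1450,2500]
    · decide
    · norm_num [List.product]
    · rw [hLbb]; norm_num
  have hab : (pProd a b).sort (· ≤ ·) = Lab := by
    apply sort_eq_of _ _ _ (by rw [hLab]; norm_num [List.pairwise_cons])
    rw [show pProd a b = ↑(([(0.4:ℝ),0.4,0.1,0.1].product [0.5,0.29,0.21,0]).map fun p => p.1*p.2) from rfl]
    refine Multiset.coe_eq_coe.mpr ?_
    apply perm_of_int [2000,1160,840,0,2000,1160,840,0,500,290,210,0,500,290,210,0]
      [0,0,0,0,210,210,290,290,500,500,840,840,1160,1160,2000,2000]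
    · decide
    · norm_num [List.product]
    · rw [hLab]; norm_num
  have hba : (pProd b a).sort (· ≤ ·) = Lab := by
    apply sort_eq_of _ _ _ (by rw [hLab]; norm_num [List.pairwise_cons])
    rw [show pProd b a = ↑(([(0.5:ℝ),0.29,0.21,0].product [0.4,0.4,0.1,0.1]).map fun p => p.1*p.2) from rfl]
    refine Multiset.coe_eq_coe.mpr ?_
    apply perm_of_int [2000,2000,500,500,1160,1160,290,290,840,840,210,210,0,0,0,0]
      [0,0,0,0,210,210,290,290,500,500,840,840,1160,1160,2000,2000]
    · decide
    · norm_num [List.product]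
    · rw [hLab]; norm_num
  refine ⟨?_, ?_, ?_, ?_⟩
  · apply maj_of _ _ _ _ haa hbb (by rw [hLaa]; rfl) (by rw [hLbb]; rfl)
    intro k hk
    interval_cases k <;> norm_num [hLaa, hLbb]
  · intro k; unfold topSum; rw [hab, hba]
  · intro h
    have := h 4
    unfold topSum at this
    rw [haa, hba, hLaa, hLab] at this
    norm_num at this
  · intro h
    have := h 2
    unfold topSum at this
    rw [hab, hbb, hLab, hLbb] at this
    norm_num at this
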